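/- Let 𝒞 be a Z2Z4-additive code and C = Φ(𝒞). Then 𝒦(𝒞) := {u ∈ 𝒞 : 2(u*v) ∈ 𝒞 for all v ∈ 𝒞} is an additive subgroup of Z2^α × Z4^β with Φ(𝒦(𝒞)) = K(C); in particular K(C) is a Z2Z4-linear code. -/
import Mathlib


/-- The ambient group `Z2^α × Z4^β`, with componentwise ring structure
(so `u * v` is the componentwise product). -/
abbrev Amb (α β : ℕ) := (Fin α → ZMod 2) × (Fin β → ZMod 4)

/-- The binary space `Z2^α × (Z2²)^β ≅ Z2^(α+2β)`. -/
abbrev Bin (α β : ℕ) := (Fin α → ZMod 2) × (Fin β → ZMod 2 × ZMod 2)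

/-- The Gray map `φ : Z4 → Z2²` with `φ(0)=(0,0), φ(1)=(0,1), φ(2)=(1,1), φ(3)=(1,0)`. -/
def grayPair (y : ZMod 4) : ZMod 2 × ZMod 2 :=
  match y.val with
  | 0 => (0, 0)
  | 1 => (0, 1)
  | 2 => (1, 1)
  | _ => (1, 0)

/-- The extended Gray map `Φ : Z2^α × Z4^β → Z2^(α+2β)`. -/
def Phi {α β : ℕ} (u : Amb α β) : Bin α β :=
  (u.1, fun i => grayPair (u.2 i))

/-- The kernel `K(C) = {x | x + C = C}` of a binary code. -/
def kernelK {α β : ℕ} (C : Set (Bin α β)) : Set (Bin α β) :=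
  {x | (fun y => x + y) '' C = C}

/-- The rank of a binary code: the `Z2`-dimension of its linear span. -/
noncomputable def rankOf {α β : ℕ} (C : Set (Bin α β)) : ℕ :=
  Module.finrank (ZMod 2) (Submodule.span (ZMod 2) C)

/-- The dimension of the kernel of a binary code. -/
noncomputable def kerDim {α β : ℕ} (C : Set (Bin α β)) : ℕ :=
  Module.finrank (ZMod 2) (Submodule.span (ZMod 2) (kernelK C))

/-- A `Z2Z4`-additive code `C ⊆ Z2^α × Z4^β` is of type `(α,β;γ,δ;κ)`:
`|C| = 2^(γ+2δ)`, the number of elements `x` with `2x = 0` is `2^(γ+δ)`, and `κ` is the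
`Z2`-dimension of the projection onto the first `α` coordinates of `{x ∈ C | 2x = 0}`. -/
def IsTypeOf (α β γ δ κ : ℕ) (C : AddSubgroup (Amb α β)) : Prop :=
  Nat.card C = 2 ^ (γ + 2 * δ) ∧
  Nat.card {x : Amb α β | x ∈ C ∧ 2 • x = 0} = 2 ^ (γ + δ) ∧
  Module.finrank (ZMod 2)
    (Submodule.span (ZMod 2) (Prod.fst '' {x : Amb α β | x ∈ C ∧ 2 • x = 0})) = κ


lemma gray_key : ∀ y z : ZMod 4, grayPair y + grayPair z = grayPair (y + z + 2 * (y * z)) := by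
  decide

lemma gray_inj : Function.Injective grayPair := by decide

lemma Phi_zero {α β : ℕ} : Phi (0 : Amb α β) = 0 := by
  unfold Phi
  refine Prod.ext rfl ?_
  funext i
  show grayPair 0 = 0
  decide

lemma Phi_inj {α β : ℕ} : Function.Injective (Phi (α := α) (β := β)) := by
  intro u v h
  obtain ⟨h1, h2⟩ := Prod.ext_iff.mp h
  refine Prod.ext h1 (funext fun i => gray_inj ?_)
  exact congrFun h2 i

lemma Phi_add_key {α β : ℕ} (u v : Amb α β) :
    Phi u + Phi v = Phi (u + v + 2 * (u * v)) := by
  unfold Phi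
  refine Prod.ext ?_ ?_
  · funext i
    show u.1 i + v.1 i = u.1 i + v.1 i + 2 * (u.1 i * v.1 i)
    have : ∀ a b : ZMod 2, a + b = a + b + 2 * (a * b) := by decide
    exact this _ _
  · funext i
    exact gray_key (u.2 i) (v.2 i)

lemma bin_add_self {α β : ℕ} (x : Bin α β) : x + x = 0 := by
  refine Prod.ext ?_ ?_
  · funext i
    show x.1 i + x.1 i = 0
    have : ∀ a : ZMod 2, a + a = 0 := by decide
    exact this _
  · funext i
    show x.2 i + x.2 i = 0
    have : ∀ a : ZMod 2 × ZMod 2, a + a = 0 := by decide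
    exact this _

lemma mem_kernelK_iff {α β : ℕ} (C' : Set (Bin α β)) (x : Bin α β) :
    x ∈ kernelK C' ↔ ∀ c ∈ C', x + c ∈ C' := by
  constructor
  · intro h c hc
    have : x + c ∈ (fun y => x + y) '' C' := ⟨c, hc, rfl⟩
    rwa [h] at this
  · intro h
    apply Set.Subset.antisymm
    · rintro _ ⟨c, hc, rfl⟩
      exact h c hc
    · intro c hc
      refine ⟨x + c, h c hc, ?_⟩
      show x + (x + c) = c
      rw [← add_assoc, bin_add_self, zero_add]

def Ksub {α β : ℕ} (C : AddSubgroup (Amb α β)) : AddSubgroup (Amb α β) where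
  carrier := {u : Amb α β | u ∈ C ∧ ∀ v ∈ C, 2 * (u * v) ∈ C}
  zero_mem' := ⟨C.zero_mem, fun v _ => by simpa using C.zero_mem⟩
  add_mem' := by
    rintro u w ⟨hu, hu2⟩ ⟨hw, hw2⟩
    refine ⟨C.add_mem hu hw, fun v hv => ?_⟩
    have h : 2 * ((u + w) * v) = 2 * (u * v) + 2 * (w * v) := by ring
    rw [h]
    exact C.add_mem (hu2 v hv) (hw2 v hv)
  neg_mem' := by
    rintro u ⟨hu, hu2⟩
    refine ⟨C.neg_mem hu, fun v hv => ?_⟩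
    have h : 2 * (-u * v) = -(2 * (u * v)) := by ring
    rw [h]
    exact C.neg_mem (hu2 v hv)

/-- `𝒦(𝒞) = {u ∈ 𝒞 : ∀ v ∈ 𝒞, 2(u*v) ∈ 𝒞}` is an additive subgroup with
`Φ(𝒦(𝒞)) = K(C)`; in particular `K(C)` is a `Z2Z4`-linear code. -/
theorem kernel_is_additive (α β : ℕ) (C : AddSubgroup (Amb α β)) :
    (∃ H : AddSubgroup (Amb α β),
        (H : Set (Amb α β)) = {u : Amb α β | u ∈ C ∧ ∀ v ∈ C, 2 * (u * v) ∈ C}) ∧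
      Phi '' {u : Amb α β | u ∈ C ∧ ∀ v ∈ C, 2 * (u * v) ∈ C} =
        kernelK (Phi '' (C : Set (Amb α β))) := by
  constructor
  · exact ⟨Ksub C, rfl⟩
  · apply Set.ext
    intro x
    rw [mem_kernelK_iff]
    constructor
    · rintro ⟨u, ⟨hu, hu2⟩, rfl⟩ c ⟨w, hw, rfl⟩
      rw [Phi_add_key]
      exact ⟨_, C.add_mem (C.add_mem hu hw) (hu2 w hw), rfl⟩
    · intro h
      have h0 : x ∈ Phi '' (C : Set (Amb α β)) := by
        have := h 0 ⟨0, C.zero_mem, Phi_zero⟩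
        rwa [add_zero] at this
      obtain ⟨u, hu, rfl⟩ := h0
      refine ⟨u, ⟨hu, fun v hv => ?_⟩, rfl⟩
      obtain ⟨w, hw, hweq⟩ := h (Phi v) ⟨v, hv, rfl⟩
      rw [Phi_add_key] at hweq
      have := Phi_inj hweq
      have h2 : 2 * (u * v) = w - u - v := by rw [this]; ring
      rw [h2]
      exact C.sub_mem (C.sub_mem hw hu) hv
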